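/- (Strong passivity theorem as a special case of the small phase theorem) Let A₁, B₁, C₁, D₁ and A₂, B₂, C₂, D₂ be real matrices of sizes n₁×n₁, n₁×m, m×n₁, m×m and n₂×n₂, n₂×m, m×n₂, m×m with A₁, A₂ Hurwitz stable, and define G(s) = C₁(s•1 − A₁)⁻¹B₁ + D₁ and H(s) = C₂(s•1 − A₂)⁻¹B₂ + D₂ over ℂ. Assume G and H are strongly positive real: for all ω ∈ ℝ, G(ω*I) + (G(ω*I))ᴴ and H(ω*I) + (H(ω*I))ᴴ are positive definite, and D₁ + D₁ᵀ and D₂ + D₂ᵀ are positive definite. Then det(1 + G(s) * H(s)) ≠ 0 for every s ∈ ℂ with 0 ≤ s.re; consequently the negative feedback interconnection of G and H is stable. -/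

import Mathlib

set_option maxHeartbeats 1000000

open Matrix
open scoped ComplexOrder

/-- The transfer function `G(s) = C (sI - A)⁻¹ B + D` of a real state-space system,
with all matrices coerced to `ℂ`. -/
noncomputable def transferFunction {n m : ℕ} (A : Matrix (Fin n) (Fin n) ℝ)
    (B : Matrix (Fin n) (Fin m) ℝ) (C : Matrix (Fin m) (Fin n) ℝ)
    (D : Matrix (Fin m) (Fin m) ℝ) (s : ℂ) : Matrix (Fin m) (Fin m) ℂ :=
  C.map Complex.ofReal * (s • (1 : Matrix (Fin n) (Fin n) ℂ) - A.map Complex.ofReal)⁻¹ *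
    B.map Complex.ofReal + D.map Complex.ofReal

/-- A real square matrix is Hurwitz stable if all its complex eigenvalues have
negative real part. -/
def IsHurwitz {n : ℕ} (A : Matrix (Fin n) (Fin n) ℝ) : Prop :=
  ∀ μ ∈ spectrum ℂ (A.map Complex.ofReal), μ.re < 0

attribute [local instance] Matrix.linftyOpNormedAddCommGroup Matrix.linftyOpNormedRing
  Matrix.linftyOpNormedAlgebra

namespace StrongPassivityAux

lemma dot_conjT {m : ℕ} (G : Matrix (Fin m) (Fin m) ℂ) (y : Fin m → ℂ) :
    star y ⬝ᵥ (Gᴴ *ᵥ y) = star (star y ⬝ᵥ (G *ᵥ y)) := by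
  rw [Matrix.dotProduct_mulVec, ← Matrix.star_mulVec, star_dotProduct]

lemma re_dot_pos {m : ℕ} (E : Matrix (Fin m) (Fin m) ℝ) (hE : E.PosDef) (y : Fin m → ℂ)
    (hy : y ≠ 0) : 0 < (star y ⬝ᵥ ((E.map Complex.ofReal) *ᵥ y)).re := by
  set a : Fin m → ℝ := fun i => (y i).re with ha
  set b : Fin m → ℝ := fun i => (y i).im with hb
  have key : (star y ⬝ᵥ ((E.map Complex.ofReal) *ᵥ y)).re = a ⬝ᵥ (E *ᵥ a) + b ⬝ᵥ (E *ᵥ b) := by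
    simp only [dotProduct, mulVec, Finset.mul_sum, Pi.star_apply, Matrix.map_apply]
    rw [Complex.re_sum, ← Finset.sum_add_distrib]
    refine Finset.sum_congr rfl fun i _ => ?_
    have h : ∀ j, (star (y i) * ((E i j : ℂ) * y j)).re = a i * (E i j * a j) + b i * (E i j * b j) := by
      intro j
      simp only [Complex.mul_re, Complex.mul_im, Complex.star_def, Complex.conj_re,
        Complex.conj_im, Complex.ofReal_re, Complex.ofReal_im]
      ring
    rw [Complex.re_sum]
    calc ∑ j, (star (y i) * ((E i j : ℂ) * y j)).re
        = ∑ j, (a i * (E i j * a j) + b i * (E i j * b j)) := Finset.sum_congr rfl fun j _ => h j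
      _ = _ := Finset.sum_add_distrib
  have hab : a ≠ 0 ∨ b ≠ 0 := by
    by_contra h
    push_neg at h
    apply hy
    funext i
    exact Complex.ext (congrFun h.1 i) (congrFun h.2 i)
  have hsa : 0 ≤ a ⬝ᵥ (E *ᵥ a) := by simpa using hE.posSemidef.dotProduct_mulVec_nonneg a
  have hsb : 0 ≤ b ⬝ᵥ (E *ᵥ b) := by simpa using hE.posSemidef.dotProduct_mulVec_nonneg b
  rw [key]
  rcases hab with h | h
  · have := hE.dotProduct_mulVec_pos h; simp at this; linarith
  · have := hE.dotProduct_mulVec_pos h; simp at this; linarith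

/-- The linear functional `X ↦ y* (C X B) y`. -/
noncomputable def Lmap {n m : ℕ} (C : Matrix (Fin m) (Fin n) ℂ) (B : Matrix (Fin n) (Fin m) ℂ)
    (y : Fin m → ℂ) : Matrix (Fin n) (Fin n) ℂ →ₗ[ℂ] ℂ where
  toFun X := star y ⬝ᵥ ((C * X * B) *ᵥ y)
  map_add' X Y := by
    simp [Matrix.mul_add, Matrix.add_mul, Matrix.add_mulVec, dotProduct_add]
  map_smul' c X := by
    simp [Matrix.mul_smul, Matrix.smul_mul, Matrix.smul_mulVec, dotProduct_smul]

/-- Main analytic lemma: for a stable strongly positive real system, the quadratic form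
`Re (y* G(s) y)` is positive on the closed right half-plane. -/
lemma key_pos {n m : ℕ} (A : Matrix (Fin n) (Fin n) ℝ) (B : Matrix (Fin n) (Fin m) ℝ)
    (C : Matrix (Fin m) (Fin n) ℝ) (D : Matrix (Fin m) (Fin m) ℝ)
    (hA : IsHurwitz A)
    (hG : ∀ ω : ℝ,
      (transferFunction A B C D ((ω : ℂ) * Complex.I) +
        (transferFunction A B C D ((ω : ℂ) * Complex.I)).conjTranspose).PosDef)
    (hD : (D + D.transpose).PosDef)
    (y : Fin m → ℂ) (hy : y ≠ 0) (s : ℂ) (hs : 0 ≤ s.re) :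
    0 < (star y ⬝ᵥ (transferFunction A B C D s *ᵥ y)).re := by
  classical
  letI : TopologicalSpace (Matrix (Fin n) (Fin n) ℂ) :=
    (inferInstance : PseudoMetricSpace (Matrix (Fin n) (Fin n) ℂ)).toUniformSpace.toTopologicalSpace
  set A' := A.map Complex.ofReal with hA'
  set B' := B.map Complex.ofReal with hB'
  set C' := C.map Complex.ofReal with hC'
  set D' := D.map Complex.ofReal with hD'
  set M : ℂ → Matrix (Fin n) (Fin n) ℂ := fun z => z • (1 : Matrix (Fin n) (Fin n) ℂ) - A'
    with hM
  -- units on the closed right half-plane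
  have hunit : ∀ z : ℂ, 0 ≤ z.re → IsUnit (M z) := by
    intro z hz
    by_contra h
    have : z ∈ spectrum ℂ A' := by
      rw [spectrum.mem_iff, Algebra.algebraMap_eq_smul_one]
      exact h
    linarith [hA z this]
  set L := (Lmap C' B' y).toContinuousLinearMap with hL
  set d : ℂ := star y ⬝ᵥ (D' *ᵥ y) with hd
  set g : ℂ → ℂ := fun z => L (Ring.inverse (M z)) + d with hg
  -- the quadratic form equals `g`
  have hLapp : ∀ X : Matrix (Fin n) (Fin n) ℂ, L X = star y ⬝ᵥ ((C' * X * B') *ᵥ y) := by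
    intro X
    rw [hL, LinearMap.coe_toContinuousLinearMap']
    rfl
  have hgeq : ∀ z : ℂ, star y ⬝ᵥ (transferFunction A B C D z *ᵥ y) = g z := by
    intro z
    show _ = L (Ring.inverse (M z)) + d
    rw [hLapp]
    simp only [transferFunction, ← hA', ← hB', ← hC', ← hD', ← hM,
      Matrix.nonsing_inv_eq_ringInverse, Matrix.add_mulVec, dotProduct_add, hd]
    rfl
  have hMdiff : Differentiable ℂ M := (differentiable_id.smul_const _).sub_const _
  have hgdiff : ∀ z : ℂ, IsUnit (M z) → DifferentiableAt ℂ g z := by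
    intro z hz
    have h1 : DifferentiableAt ℂ (fun w => Ring.inverse (M w)) z :=
      (hMdiff z).inverse hz
    exact ((L.differentiable.differentiableAt).comp z h1).add_const d
  -- global bound on the closed right half-plane
  have hFb : ∀ t : ℝ, 1 ≤ t → ∀ z : ℂ, IsUnit (M z) → ‖A'‖ + t ≤ ‖z‖ →
      ‖Ring.inverse (M z)‖ ≤ ‖(1 : Matrix (Fin n) (Fin n) ℂ)‖ / t := by
    intro t ht z hz hz2
    set F := Ring.inverse (M z) with hF
    have hmul : M z * F = 1 := Ring.mul_inverse_cancel _ hz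
    have hid : z • F = 1 + A' * F := by
      have h0 := hmul
      rw [hM] at h0
      rw [Matrix.sub_mul, Matrix.smul_mul, Matrix.one_mul] at h0
      rw [← h0]; abel
    have h1 : ‖z‖ * ‖F‖ ≤ ‖(1 : Matrix (Fin n) (Fin n) ℂ)‖ + ‖A'‖ * ‖F‖ := by
      calc ‖z‖ * ‖F‖ = ‖z • F‖ := (norm_smul z F).symm
      _ = ‖1 + A' * F‖ := by rw [hid]
      _ ≤ ‖(1 : Matrix (Fin n) (Fin n) ℂ)‖ + ‖A' * F‖ := norm_add_le _ _
      _ ≤ _ := by gcongr; exact norm_mul_le _ _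
    have htpos : (0:ℝ) < t := by linarith
    rw [le_div_iff₀ htpos]
    nlinarith [norm_nonneg F, norm_nonneg (1 : Matrix (Fin n) (Fin n) ℂ)]
  set R : ℝ := ‖A'‖ + 1 with hR
  set S : Set ℂ := Metric.closedBall 0 R ∩ {z : ℂ | 0 ≤ z.re} with hS
  have hSsub : S ⊆ {z : ℂ | IsUnit (M z)} := fun z hz => hunit z hz.2
  have hScompact : IsCompact S :=
    (isCompact_closedBall 0 R).inter_right (isClosed_le continuous_const Complex.continuous_re)
  have hgcontS : ContinuousOn g S := fun z hz =>
    ((hgdiff z (hSsub hz)).continuousAt).continuousWithinAt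
  obtain ⟨Kc, hKc⟩ := hScompact.exists_bound_of_continuousOn hgcontS
  set Kf : ℝ := ‖L‖ * ‖(1 : Matrix (Fin n) (Fin n) ℂ)‖ + ‖d‖ with hKf
  have hgb : ∀ z : ℂ, 0 ≤ z.re → ‖g z‖ ≤ max Kc Kf := by
    intro z hz
    rcases le_or_gt ‖z‖ R with h | h
    · exact le_trans (hKc z ⟨by simpa [Metric.mem_closedBall, dist_eq_norm] using h, hz⟩)
        (le_max_left _ _)
    · refine le_trans ?_ (le_max_right _ _)
      have hF := hFb 1 le_rfl z (hunit z hz) (by rw [← hR]; linarith)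
      calc ‖g z‖ ≤ ‖L (Ring.inverse (M z))‖ + ‖d‖ := norm_add_le _ _
        _ ≤ ‖L‖ * ‖Ring.inverse (M z)‖ + ‖d‖ := by gcongr; exact L.le_opNorm _
        _ ≤ ‖L‖ * ‖(1 : Matrix (Fin n) (Fin n) ℂ)‖ + ‖d‖ := by
            have := L.opNorm_nonneg
            have h2 : ‖Ring.inverse (M z)‖ ≤ ‖(1 : Matrix (Fin n) (Fin n) ℂ)‖ := by
              rw [div_one] at hF; exact hF
            gcongr
  -- positivity on the imaginary axis
  have haxis : ∀ ω : ℝ, 0 < (g ((ω : ℂ) * Complex.I)).re := by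
    intro ω
    have hpos := (hG ω).dotProduct_mulVec_pos hy
    set w : ℂ := star y ⬝ᵥ (transferFunction A B C D ((ω : ℂ) * Complex.I) *ᵥ y) with hw
    have hexp : star y ⬝ᵥ ((transferFunction A B C D ((ω : ℂ) * Complex.I) +
        (transferFunction A B C D ((ω : ℂ) * Complex.I)).conjTranspose) *ᵥ y) = w + star w := by
      rw [Matrix.add_mulVec, dotProduct_add, dot_conjT]
    rw [hexp, Complex.lt_def] at hpos
    have : 0 < w.re := by
      have := hpos.1
      simp only [Complex.add_re, Complex.zero_re, Complex.star_def, Complex.conj_re] at this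
      linarith
    rw [← hgeq]; exact this
  -- positivity of the feedthrough quadratic form
  have hdpos : 0 < d.re := by
    have h1 : d + star d = star y ⬝ᵥ (((D + D.transpose).map Complex.ofReal) *ᵥ y) := by
      have hDT : (D.transpose.map Complex.ofReal) = D'ᴴ := by
        ext i j
        simp [Matrix.conjTranspose_apply, Matrix.map_apply, Complex.conj_ofReal, hD']
      have hmapadd : (D + D.transpose).map Complex.ofReal = D' + D.transpose.map Complex.ofReal := by
        ext i j; simp [Matrix.map_apply, hD']
      rw [hmapadd, hDT, Matrix.add_mulVec, dotProduct_add, ← hd, dot_conjT, ← hd]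
    have h2 := re_dot_pos (D + D.transpose) hD y hy
    rw [← h1] at h2
    simp only [Complex.add_re, Complex.star_def, Complex.conj_re] at h2
    linarith
  set c : ℝ := d.re with hc
  -- lower bound far away on the imaginary axis
  set K : ℝ := ‖L‖ * ‖(1 : Matrix (Fin n) (Fin n) ℂ)‖ with hK
  have hKnn : 0 ≤ K := mul_nonneg L.opNorm_nonneg (norm_nonneg _)
  set t₀ : ℝ := max 1 (2 * (K + 1) / c) with ht₀
  have ht₀1 : 1 ≤ t₀ := le_max_left _ _
  set Rδ : ℝ := ‖A'‖ + t₀ with hRδ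
  have hfar : ∀ ω : ℝ, Rδ ≤ |ω| → c / 2 ≤ (g ((ω : ℂ) * Complex.I)).re := by
    intro ω hω
    have hnorm : ‖((ω : ℂ) * Complex.I)‖ = |ω| := by
      rw [norm_mul]
      simp
    have hzre : ((ω : ℂ) * Complex.I).re = 0 := by simp
    have hF := hFb t₀ ht₀1 _ (hunit _ (le_of_eq hzre.symm)) (by rw [hnorm]; exact hω)
    have hdiff : ‖g ((ω : ℂ) * Complex.I) - d‖ ≤ K / t₀ := by
      have : g ((ω : ℂ) * Complex.I) - d = L (Ring.inverse (M ((ω : ℂ) * Complex.I))) := by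
        simp [hg]
      rw [this]
      calc ‖L (Ring.inverse (M ((ω : ℂ) * Complex.I)))‖
          ≤ ‖L‖ * ‖Ring.inverse (M ((ω : ℂ) * Complex.I))‖ := L.le_opNorm _
        _ ≤ ‖L‖ * (‖(1 : Matrix (Fin n) (Fin n) ℂ)‖ / t₀) := by
            gcongr
        _ = K / t₀ := by rw [hK]; ring
    have hKt : K / t₀ ≤ c / 2 := by
      have ht₀pos : (0:ℝ) < t₀ := by linarith
      rw [div_le_iff₀ ht₀pos]
      have h2 : 2 * (K + 1) / c ≤ t₀ := le_max_right _ _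
      rw [div_le_iff₀ hdpos] at h2
      nlinarith [hdpos]
    have hre : |(g ((ω : ℂ) * Complex.I) - d).re| ≤ K / t₀ :=
      le_trans (Complex.abs_re_le_norm _) (by assumption)
    have := abs_le.1 hre
    have hsub : (g ((ω : ℂ) * Complex.I) - d).re = (g ((ω : ℂ) * Complex.I)).re - c := by
      simp [Complex.sub_re, hc]
    rw [hsub] at this
    linarith [this.1, hKt]
  -- uniform positive lower bound `δ` on the axis
  set R₁ : ℝ := max Rδ 0 with hR₁
  have hIcc : IsCompact (Set.Icc (-R₁) R₁) := isCompact_Icc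
  have hR₁nn : (0:ℝ) ≤ R₁ := le_max_right _ _
  have hIccne : (Set.Icc (-R₁) R₁).Nonempty := ⟨0, Set.mem_Icc.2 ⟨by linarith, hR₁nn⟩⟩
  have hφcont : ContinuousOn (fun ω : ℝ => (g ((ω : ℂ) * Complex.I)).re) (Set.Icc (-R₁) R₁) := by
    intro ω _
    have h1 : ContinuousAt (fun ω : ℝ => (g ((ω : ℂ) * Complex.I)).re) ω := by
      have hz : ((ω : ℂ) * Complex.I).re = 0 := by simp
      have hcg : ContinuousAt g ((ω : ℂ) * Complex.I) :=
        (hgdiff _ (hunit _ (le_of_eq hz.symm))).continuousAt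
      have hmulc : ContinuousAt (fun x : ℝ => (x : ℂ) * Complex.I) ω :=
        (Complex.continuous_ofReal.mul continuous_const).continuousAt
      exact ContinuousAt.comp (g := Complex.re)
        (f := fun x : ℝ => g ((x : ℂ) * Complex.I)) Complex.continuous_re.continuousAt
        (ContinuousAt.comp (g := g) (f := fun x : ℝ => (x : ℂ) * Complex.I) hcg hmulc)
    exact h1.continuousWithinAt
  obtain ⟨ω₀, hω₀mem, hω₀min⟩ := hIcc.exists_isMinOn hIccne hφcont
  set μ : ℝ := (g ((ω₀ : ℂ) * Complex.I)).re with hμ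
  have hμpos : 0 < μ := haxis ω₀
  set δ : ℝ := min (c / 2) μ with hδ
  have hδpos : 0 < δ := lt_min (by linarith) hμpos
  have hδle : ∀ ω : ℝ, δ ≤ (g ((ω : ℂ) * Complex.I)).re := by
    intro ω
    rcases le_or_gt R₁ |ω| with h | h
    · exact le_trans (min_le_left _ _) (hfar ω (le_trans (le_max_left _ _) h))
    · have hmem : ω ∈ Set.Icc (-R₁) R₁ := by
        constructor <;> [linarith [neg_abs_le ω]; linarith [le_abs_self ω]]
      exact le_trans (min_le_right _ _) (hω₀min hmem)
  -- Phragmén–Lindelöf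
  set f : ℂ → ℂ := fun z => Complex.exp ((δ : ℂ) * (z + 1)⁻¹ - g z) with hf
  have hfnorm : ∀ z : ℂ, ‖f z‖ = Real.exp (δ * ((z + 1)⁻¹).re - (g z).re) := by
    intro z
    rw [hf]
    simp only [Complex.norm_exp, Complex.sub_re, Complex.re_ofReal_mul]
  have hCb : ∀ z : ℂ, 0 ≤ z.re → ‖f z‖ ≤ Real.exp (δ + max Kc Kf) := by
    intro z hz
    rw [hfnorm]
    apply Real.exp_le_exp.2
    have h1 : ((z + 1)⁻¹).re ≤ 1 := by
      have hz1 : (1:ℝ) ≤ ‖z + 1‖ := by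
        have : (z+1).re ≤ ‖z+1‖ := Complex.re_le_norm _
        simp only [Complex.add_re, Complex.one_re] at this
        linarith
      have : ‖(z + 1)⁻¹‖ ≤ 1 := by
        rw [norm_inv]
        exact inv_le_one_of_one_le₀ hz1
      exact le_trans (Complex.re_le_norm _) this
    have h2 : -(g z).re ≤ max Kc Kf :=
      le_trans (neg_le_abs _) (le_trans (Complex.abs_re_le_norm _)
        (by exact hgb z hz))
    nlinarith [hδpos.le]
  have hdiffcl : DiffContOnCl ℂ f {z : ℂ | 0 < z.re} := by
    constructor
    · intro z hz
      have hz' : (0:ℝ) ≤ z.re := le_of_lt hz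
      have hne : z + 1 ≠ 0 := by
        intro h
        have : (z + 1).re = 0 := by rw [h]; simp
        simp only [Complex.add_re, Complex.one_re] at this
        simp only [Set.mem_setOf_eq] at hz
        linarith
      exact (((differentiableAt_const _).mul
        ((differentiableAt_id.add_const (1:ℂ)).inv hne)).sub
        (hgdiff z (hunit z hz'))).cexp.differentiableWithinAt
    · rw [Complex.closure_setOf_lt_re]
      intro z hz
      have hz' : (0:ℝ) ≤ z.re := hz
      have hne : z + 1 ≠ 0 := by
        intro h
        have : (z + 1).re = 0 := by rw [h]; simp
        simp only [Complex.add_re, Complex.one_re] at this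
        linarith
      exact ((((differentiableAt_const _).mul
        ((differentiableAt_id.add_const (1:ℂ)).inv hne)).sub
        (hgdiff z (hunit z hz'))).cexp.continuousAt).continuousWithinAt
  have hexp : ∃ cc < (2:ℝ), ∃ Bc : ℝ, f =O[Bornology.cobounded ℂ ⊓ Filter.principal {z : ℂ | 0 < z.re}]
      fun z => Real.exp (Bc * ‖z‖ ^ cc) := by
    refine ⟨1, one_lt_two, 0, Asymptotics.IsBigO.of_bound (Real.exp (δ + max Kc Kf)) ?_⟩
    rw [Filter.eventually_inf_principal]
    filter_upwards with z hz
    simp only [Real.rpow_one, zero_mul, Real.exp_zero, norm_one, mul_one]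
    exact hCb z (le_of_lt hz)
  have hre_bound : Filter.IsBoundedUnder (· ≤ ·) Filter.atTop fun x : ℝ => ‖f x‖ := by
    refine ⟨Real.exp (δ + max Kc Kf), ?_⟩
    rw [Filter.eventually_map]
    filter_upwards [Filter.eventually_ge_atTop (0:ℝ)] with x hx
    exact hCb x (by simp [hx])
  have him : ∀ x : ℝ, ‖f ((x : ℂ) * Complex.I)‖ ≤ 1 := by
    intro x
    rw [hfnorm, Real.exp_le_one_iff]
    have h1 : (((x : ℂ) * Complex.I + 1)⁻¹).re = 1 / (1 + x * x) := by
      rw [Complex.inv_re]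
      have hre : ((x : ℂ) * Complex.I + 1).re = 1 := by simp
      have him' : ((x : ℂ) * Complex.I + 1).im = x := by simp
      rw [Complex.normSq_apply, hre, him']
      ring_nf
    rw [h1]
    have h3 : (0:ℝ) < 1 + x * x := by linarith [mul_self_nonneg x]
    have h4 : δ * (1 / (1 + x * x)) ≤ δ * 1 :=
      mul_le_mul_of_nonneg_left ((div_le_one h3).2 (by linarith [mul_self_nonneg x]))
        hδpos.le
    have h6 := hδle x
    rw [mul_one] at h4
    linarith
  have hPL : ∀ z : ℂ, 0 ≤ z.re → ‖f z‖ ≤ 1 := fun z hz =>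
    PhragmenLindelof.right_half_plane_of_bounded_on_real hdiffcl hexp hre_bound him hz
  -- conclude
  have hfle := hPL s hs
  rw [hfnorm, Real.exp_le_one_iff] at hfle
  have hre_inv : 0 < ((s + 1)⁻¹).re := by
    rw [Complex.inv_re]
    apply div_pos
    · simp only [Complex.add_re, Complex.one_re]; linarith
    · apply Complex.normSq_pos.2
      intro h
      have : (s + 1).re = 0 := by rw [h]; simp
      simp only [Complex.add_re, Complex.one_re] at this
      linarith
  have : 0 < (g s).re := by nlinarith
  rw [hgeq]; exact this

end StrongPassivityAux

theorem strong_passivity_theorem {n₁ n₂ m : ℕ}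
    (A₁ : Matrix (Fin n₁) (Fin n₁) ℝ) (B₁ : Matrix (Fin n₁) (Fin m) ℝ)
    (C₁ : Matrix (Fin m) (Fin n₁) ℝ) (D₁ : Matrix (Fin m) (Fin m) ℝ)
    (A₂ : Matrix (Fin n₂) (Fin n₂) ℝ) (B₂ : Matrix (Fin n₂) (Fin m) ℝ)
    (C₂ : Matrix (Fin m) (Fin n₂) ℝ) (D₂ : Matrix (Fin m) (Fin m) ℝ)
    (hA₁ : IsHurwitz A₁) (hA₂ : IsHurwitz A₂)
    (hG : ∀ ω : ℝ,
      (transferFunction A₁ B₁ C₁ D₁ ((ω : ℂ) * Complex.I) +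
        (transferFunction A₁ B₁ C₁ D₁ ((ω : ℂ) * Complex.I)).conjTranspose).PosDef)
    (hH : ∀ ω : ℝ,
      (transferFunction A₂ B₂ C₂ D₂ ((ω : ℂ) * Complex.I) +
        (transferFunction A₂ B₂ C₂ D₂ ((ω : ℂ) * Complex.I)).conjTranspose).PosDef)
    (hD₁ : (D₁ + D₁.transpose).PosDef) (hD₂ : (D₂ + D₂.transpose).PosDef) :
    ∀ s : ℂ, 0 ≤ s.re →
      (1 + transferFunction A₁ B₁ C₁ D₁ s * transferFunction A₂ B₂ C₂ D₂ s).det ≠ 0 := by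
  intro s hs hdet
  obtain ⟨x, hx, hker⟩ := (Matrix.exists_mulVec_eq_zero_iff).2 hdet
  set G := transferFunction A₁ B₁ C₁ D₁ s with hGdef
  set H := transferFunction A₂ B₂ C₂ D₂ s with hHdef
  set v : Fin m → ℂ := H *ᵥ x with hv
  have hGv : G *ᵥ v = -x := by
    have h0 : x + G *ᵥ v = 0 := by
      have := hker
      rw [Matrix.add_mulVec, Matrix.one_mulVec, ← Matrix.mulVec_mulVec] at this
      exact this
    exact eq_neg_of_add_eq_zero_right h0
  have hvne : v ≠ 0 := by
    intro h
    apply hx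
    have : G *ᵥ v = 0 := by rw [h, Matrix.mulVec_zero]
    rw [hGv] at this
    simpa using congrArg Neg.neg this
  have h1 : 0 < (star x ⬝ᵥ (H *ᵥ x)).re :=
    StrongPassivityAux.key_pos A₂ B₂ C₂ D₂ hA₂ hH hD₂ x hx s hs
  have h2 : 0 < (star v ⬝ᵥ (G *ᵥ v)).re :=
    StrongPassivityAux.key_pos A₁ B₁ C₁ D₁ hA₁ hG hD₁ v hvne s hs
  have h3 : star v ⬝ᵥ (G *ᵥ v) = -(star v ⬝ᵥ x) := by
    rw [hGv, dotProduct_neg]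
  have h4 : star v ⬝ᵥ x = star (star x ⬝ᵥ v) := star_dotProduct _ _
  rw [h3, h4] at h2
  simp only [Complex.neg_re, Complex.star_def, Complex.conj_re] at h2
  rw [← hv] at h1
  linarith
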